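/- Let f : ℝⁿ → ℝ be differentiable with gradient g = ∇f satisfying ‖g(x) − g(y)‖ ≤ M‖x − y‖ for all x, y, let μ > 0 and θ ∈ (0,1). Fix x ∈ ℝⁿ, set φ(y) = f(y) + μ‖y‖₁ and ℓ(y) = f(x) + g(x)ᵀ(y − x) + μ‖y‖₁, and let d ∈ ℝⁿ and λ > 0 satisfy ℓ(x) − ℓ(x + d) ≥ (λ/2)‖d‖². Then for every α with 0 < α ≤ 1 and α ≤ (1 − θ)λ/M, the sufficient decrease condition φ(x) − φ(x + αd) ≥ θ(ℓ(x) − ℓ(x + αd)) holds. -/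

import Mathlib

open scoped RealInnerProductSpace

variable {n : ℕ}
local notation "E" => EuclideanSpace ℝ (Fin n)
local notation "CLM" => Matrix.toEuclideanCLM (𝕜 := ℝ)

/-- Descent lemma: with an `M`-Lipschitz gradient, `f` is bounded above by its
quadratic expansion. -/
lemma descent_aux (f : EuclideanSpace ℝ (Fin n) → ℝ)
    (g : EuclideanSpace ℝ (Fin n) → EuclideanSpace ℝ (Fin n))
    (hg : ∀ y, HasGradientAt f (g y) y)
    (M : ℝ) (hLip : ∀ a b, ‖g a - g b‖ ≤ M * ‖a - b‖)
    (x v : EuclideanSpace ℝ (Fin n)) :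
    f (x + v) ≤ f x + ⟪g x, v⟫ + M / 2 * ‖v‖ ^ 2 := by
  set ψ : ℝ → ℝ := fun t => f (x + t • v) - t * ⟪g x, v⟫ - M / 2 * t ^ 2 * ‖v‖ ^ 2 with hψ
  have hderiv : ∀ t : ℝ, HasDerivAt ψ
      (⟪g (x + t • v), v⟫ - ⟪g x, v⟫ - M * t * ‖v‖ ^ 2) t := by
    intro t
    have h1 : HasDerivAt (fun t : ℝ => x + t • v) v t := by
      simpa using ((hasDerivAt_id t).smul_const v).const_add x
    have h2 := (hg (x + t • v)).hasFDerivAt.comp_hasDerivAt t h1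
    have h3 : (InnerProductSpace.toDual ℝ _ (g (x + t • v))) v = ⟪g (x + t • v), v⟫ := rfl
    have h4 : HasDerivAt (fun t : ℝ => t * ⟪g x, v⟫) (⟪g x, v⟫) t := by
      simpa using (hasDerivAt_id t).mul_const (⟪g x, v⟫)
    have h5 : HasDerivAt (fun t : ℝ => M / 2 * t ^ 2 * ‖v‖ ^ 2) (M * t * ‖v‖ ^ 2) t := by
      have := ((hasDerivAt_pow 2 t).const_mul (M / 2)).mul_const (‖v‖ ^ 2)
      refine this.congr_deriv ?_; ring
    exact (h2.sub h4).sub h5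
  have hanti : AntitoneOn ψ (Set.Icc (0:ℝ) 1) := by
    apply antitoneOn_of_deriv_nonpos (convex_Icc 0 1)
    · exact fun t _ => ((hderiv t).continuousAt).continuousWithinAt
    · exact fun t _ => ((hderiv t).differentiableAt).differentiableWithinAt
    · intro t ht
      rw [interior_Icc] at ht
      rw [(hderiv t).deriv]
      have h1 : ⟪g (x + t • v), v⟫ - ⟪g x, v⟫ = ⟪g (x + t • v) - g x, v⟫ := by
        rw [inner_sub_left]
      have h2 : ⟪g (x + t • v) - g x, v⟫ ≤ ‖g (x + t • v) - g x‖ * ‖v‖ := real_inner_le_norm _ _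
      have h3 : ‖g (x + t • v) - g x‖ ≤ M * ‖t • v‖ := by
        have := hLip (x + t • v) x; simpa using this
      have h4 : ‖t • v‖ = t * ‖v‖ := by
        rw [norm_smul, Real.norm_eq_abs, abs_of_pos ht.1]
      rw [h4] at h3
      have h5 : ‖g (x + t • v) - g x‖ * ‖v‖ ≤ M * t * ‖v‖ ^ 2 := by
        nlinarith [norm_nonneg v, norm_nonneg (g (x + t • v) - g x)]
      rw [h1]; linarith
  have := hanti (Set.left_mem_Icc.2 zero_le_one) (Set.right_mem_Icc.2 zero_le_one) zero_le_one
  have e1 : ψ 1 = f (x + v) - ⟪g x, v⟫ - M / 2 * ‖v‖ ^ 2 := by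
    simp only [hψ, one_smul, one_pow, one_mul, mul_one]
  have e0 : ψ 0 = f x := by
    simp only [hψ, zero_smul, add_zero, zero_mul, ne_eq, OfNat.ofNat_ne_zero,
      not_false_eq_true, zero_pow, mul_zero, sub_zero]
  rw [e1, e0] at this
  linarith

/-- sufficient decrease holds for every step length
`0 < α ≤ 1` with `α ≤ (1-θ)λ/M`. -/
theorem stmt_5
    (f : E → ℝ) (g : E → E)
    (hg : ∀ y, HasGradientAt f (g y) y)
    (M : ℝ) (hLip : ∀ a b : E, ‖g a - g b‖ ≤ M * ‖a - b‖)
    (μ θ : ℝ) (hμ : 0 < μ) (hθ0 : 0 < θ) (hθ1 : θ < 1)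
    (x : E)
    (φ : E → ℝ) (hφ : ∀ y, φ y = f y + μ * ∑ i, |y i|)
    (ℓ : E → ℝ)
    (hℓ : ∀ y, ℓ y = f x + ⟪g x, y - x⟫ + μ * ∑ i, |y i|)
    (d : E) (lam : ℝ) (hlam : 0 < lam)
    (hd : ℓ x - ℓ (x + d) ≥ (lam / 2) * ‖d‖ ^ 2) :
    ∀ α : ℝ, 0 < α → α ≤ 1 → α ≤ (1 - θ) * lam / M →
      φ x - φ (x + α • d) ≥ θ * (ℓ x - ℓ (x + α • d)) := by
  intro α hα0 hα1 hαM
  have hM : 0 < M := by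
    by_contra h
    push_neg at h
    rcases lt_or_eq_of_le h with h' | h'
    · have : (1 - θ) * lam / M < 0 :=
        div_neg_of_pos_of_neg (by nlinarith) h'
      linarith
    · rw [h', div_zero] at hαM; linarith
  have hαM' : α * M ≤ (1 - θ) * lam := (le_div_iff₀ hM).mp hαM
  set N : ℝ := ∑ i, |x i| with hN
  set N1 : ℝ := ∑ i, |(x + d) i| with hN1
  set Nα : ℝ := ∑ i, |(x + α • d) i| with hNα
  have hconv : Nα ≤ (1 - α) * N + α * N1 := by
    rw [hN, hN1, hNα, Finset.mul_sum, Finset.mul_sum, ← Finset.sum_add_distrib]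
    apply Finset.sum_le_sum
    intro i _
    have e : (x + α • d) i = (1 - α) * x i + α * ((x + d) i) := by
      simp only [PiLp.add_apply, PiLp.smul_apply, smul_eq_mul]
      ring
    rw [e]
    calc |(1 - α) * x i + α * ((x + d) i)|
        ≤ |(1 - α) * x i| + |α * ((x + d) i)| := abs_add_le _ _
      _ = (1 - α) * |x i| + α * |(x + d) i| := by
          rw [abs_mul, abs_mul, abs_of_nonneg (by linarith : (0:ℝ) ≤ 1 - α),
            abs_of_pos hα0]
  set G : ℝ := ⟪g x, d⟫ with hG
  have hℓx : ℓ x = f x + μ * N := by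
    rw [hℓ]; simp [hN]
  have hℓxd : ℓ (x + d) = f x + G + μ * N1 := by
    rw [hℓ]; simp [hG, hN1]
  have hℓα : ℓ (x + α • d) = f x + α * G + μ * Nα := by
    rw [hℓ]
    have : x + α • d - x = α • d := by abel
    rw [this, real_inner_smul_right]
  have hdesc : f (x + α • d) ≤ f x + α * G + M / 2 * α ^ 2 * ‖d‖ ^ 2 := by
    have h := descent_aux f g hg M hLip x (α • d)
    have e1 : ⟪g x, α • d⟫ = α * G := real_inner_smul_right _ _ _
    have e2 : ‖α • d‖ ^ 2 = α ^ 2 * ‖d‖ ^ 2 := by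
      rw [norm_smul, mul_pow, Real.norm_eq_abs, sq_abs]
    rw [e1, e2] at h
    linarith
  have hφx : φ x = f x + μ * N := by rw [hφ]
  have hφα : φ (x + α • d) = f (x + α • d) + μ * Nα := by rw [hφ]
  -- D ≥ α (λ/2)‖d‖²
  have hD : ℓ x - ℓ (x + α • d) ≥ α * (lam / 2) * ‖d‖ ^ 2 := by
    rw [hℓx, hℓxd] at hd
    rw [hℓx, hℓα]
    nlinarith [mul_le_mul_of_nonneg_left hconv hμ.le,
      mul_le_mul_of_nonneg_left hd hα0.le]
  have hkey : φ x - φ (x + α • d) ≥ (ℓ x - ℓ (x + α • d)) - M / 2 * α ^ 2 * ‖d‖ ^ 2 := by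
    rw [hφx, hφα, hℓx, hℓα]
    linarith
  have hquad : M / 2 * α ^ 2 * ‖d‖ ^ 2 ≤ (1 - θ) * (ℓ x - ℓ (x + α • d)) := by
    have h1 : M / 2 * α ^ 2 * ‖d‖ ^ 2 ≤ (1 - θ) * (α * (lam / 2) * ‖d‖ ^ 2) := by
      have h0 := mul_le_mul_of_nonneg_right hαM'
        (mul_nonneg hα0.le (sq_nonneg ‖d‖))
      nlinarith [h0]
    have h2 : (1 - θ) * (α * (lam / 2) * ‖d‖ ^ 2) ≤ (1 - θ) * (ℓ x - ℓ (x + α • d)) :=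
      mul_le_mul_of_nonneg_left hD (by linarith)
    linarith
  linarith
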